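/- arXiv:2207.11014 — 4 statements merged into one kernel-verified Lean document; each statement's English description precedes it below -/
import Mathlib

section
/- Let N ≥ 1 and 1 ≤ K ≤ N be integers, let w ∈ ℝ^N be a nonzero vector with nonnegative entries, and let H ⊆ {1,…,N} be a top-K set for w. Let ψ be the unit vector in the Euclidean space indexed by {1,…,N} × {0,1} defined by ψ(i,0) = √(w_i/Z), ψ(i,1) = 0 for i ∈ H, ψ(i,1) = √((m − w_i)/Z) for i ∉ H, where m = min_{i ∈ H} w_i and Z = (N−K)·m + ∑_{i ∈ H} w_i. Let φ be the vector defined by φ(i,0) = √(w_i/W) and φ(i,1) = 0, where W = ∑_{i=1}^N w_i. Then the inner product ⟨ψ, φ⟩ equals √(W/Z). -/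
open scoped RealInnerProductSpace

/-- The inner product of the state `ψ` produced by the circuit `𝒞` with the target state
`φ = |w⟩ ⊗ e₀` equals `√(W/Z)`. -/
theorem inner_psi_phi (N K : ℕ) (hN : 1 ≤ N) (hK : 1 ≤ K) (hKN : K ≤ N)
    (w : Fin N → ℝ) (hw : ∀ i, 0 ≤ w i) (hw0 : w ≠ 0)
    (H : Finset (Fin N)) (hHne : H.Nonempty) (hHcard : H.card = K)
    (htop : ∀ i ∈ H, ∀ j ∉ H, w j ≤ w i)
    (W m Z : ℝ) (hW : W = ∑ i, w i) (hm : m = H.inf' hHne w)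
    (hZ : Z = ((N : ℝ) - K) * m + ∑ i ∈ H, w i)
    (ψ φ : EuclideanSpace ℝ (Fin N × Fin 2))
    (hψ0 : ∀ i, ψ (i, 0) = Real.sqrt (w i / Z))
    (hψ1 : ∀ i, ψ (i, 1) = if i ∈ H then 0 else Real.sqrt ((m - w i) / Z))
    (hφ0 : ∀ i, φ (i, 0) = Real.sqrt (w i / W))
    (hφ1 : ∀ i, φ (i, 1) = 0) :
    ⟪ψ, φ⟫ = Real.sqrt (W / Z) := by
  -- positivity facts
  obtain ⟨i₀, hi₀⟩ : ∃ i, 0 < w i := by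
    by_contra h
    push_neg at h
    exact hw0 (funext fun i => le_antisymm (h i) (hw i))
  have hWpos : 0 < W := by
    rw [hW]
    exact Finset.sum_pos' (fun i _ => hw i) ⟨i₀, Finset.mem_univ i₀, hi₀⟩
  have hm0 : 0 ≤ m := by
    rw [hm]
    exact Finset.le_inf' hHne w fun i _ => hw i
  have hHsum : 0 < ∑ i ∈ H, w i := by
    obtain ⟨j, hj⟩ := hHne
    by_cases h : i₀ ∈ H
    · exact Finset.sum_pos' (fun i _ => hw i) ⟨i₀, h, hi₀⟩
    · exact Finset.sum_pos' (fun i _ => hw i) ⟨j, hj, lt_of_lt_of_le hi₀ (htop j hj i₀ h)⟩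
  have hZpos : 0 < Z := by
    rw [hZ]
    have hNK : (0:ℝ) ≤ (N : ℝ) - K := by
      have : (K:ℝ) ≤ N := by exact_mod_cast hKN
      linarith
    nlinarith
  have hZW : 0 < Z * W := mul_pos hZpos hWpos
  -- compute each term
  have hterm : ∀ i : Fin N, ψ (i, 0) * φ (i, 0) = w i / Real.sqrt (Z * W) := by
    intro i
    rw [hψ0, hφ0, ← Real.sqrt_mul (div_nonneg (hw i) hZpos.le)]
    have : w i / Z * (w i / W) = (w i)^2 / (Z * W) := by ring
    rw [this, Real.sqrt_div (sq_nonneg (w i)),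
      Real.sqrt_sq (hw i)]
  -- expand inner product
  rw [PiLp.inner_apply]
  simp only [RCLike.inner_apply, starRingEnd_apply, star_trivial]
  rw [Fintype.sum_prod_type]
  have : ∀ i : Fin N, ∑ b : Fin 2, ψ (i, b) * φ (i, b) = w i / Real.sqrt (Z * W) := by
    intro i
    rw [Fin.sum_univ_two, hφ1, mul_zero, add_zero, hterm]
  simp_rw [mul_comm (φ _) (ψ _)]
  rw [Finset.sum_congr rfl fun i _ => this i, ← Finset.sum_div, ← hW]
  rw [eq_comm, Real.sqrt_eq_iff_eq_sq] <;>
    [skip; positivity; positivity]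
  rw [div_pow, Real.sq_sqrt hZW.le]
  field_simp
end

section
/- Let N ≥ 1 and 1 ≤ K ≤ N be integers, let w ∈ ℝ^N be a nonzero vector with nonnegative entries, and let H ⊆ {1,…,N} be a top-K set for w. Let ψ and φ = |w⟩ ⊗ e₀ be as defined (ψ(i,0) = √(w_i/Z), ψ(i,1) = 0 for i ∈ H, ψ(i,1) = √((m − w_i)/Z) for i ∉ H; φ(i,0) = √(w_i/W), φ(i,1) = 0). Then the squared inner product ⟨ψ, φ⟩² is at least K/N. -/
open scoped RealInnerProductSpace

/-- The squared inner product between the state `ψ` produced by the circuit `𝒞` and the target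
state `φ = |w⟩ ⊗ e₀` is at least `K/N`. -/
theorem inner_psi_phi_sq_ge (N K : ℕ) (hN : 1 ≤ N) (hK : 1 ≤ K) (hKN : K ≤ N)
    (w : Fin N → ℝ) (hw : ∀ i, 0 ≤ w i) (hw0 : w ≠ 0)
    (H : Finset (Fin N)) (hHne : H.Nonempty) (hHcard : H.card = K)
    (htop : ∀ i ∈ H, ∀ j ∉ H, w j ≤ w i)
    (W m Z : ℝ) (hW : W = ∑ i, w i) (hm : m = H.inf' hHne w)
    (hZ : Z = ((N : ℝ) - K) * m + ∑ i ∈ H, w i)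
    (ψ φ : EuclideanSpace ℝ (Fin N × Fin 2))
    (hψ0 : ∀ i, ψ (i, 0) = Real.sqrt (w i / Z))
    (hψ1 : ∀ i, ψ (i, 1) = if i ∈ H then 0 else Real.sqrt ((m - w i) / Z))
    (hφ0 : ∀ i, φ (i, 0) = Real.sqrt (w i / W))
    (hφ1 : ∀ i, φ (i, 1) = 0) :
    (K : ℝ) / N ≤ ⟪ψ, φ⟫ ^ 2 := by
  -- there is some positive entry
  obtain ⟨j, hj⟩ : ∃ j, w j ≠ 0 := by
    by_contra h
    push_neg at h
    exact hw0 (funext h)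
  have hjpos : 0 < w j := lt_of_le_of_ne (hw j) (Ne.symm hj)
  -- sum over H is positive
  have hSH : 0 < ∑ i ∈ H, w i := by
    by_cases hjH : j ∈ H
    · exact lt_of_lt_of_le hjpos
        (Finset.single_le_sum (fun i _ => hw i) hjH)
    · obtain ⟨i, hi⟩ := hHne
      exact lt_of_lt_of_le (lt_of_lt_of_le hjpos (htop i hi j hjH))
        (Finset.single_le_sum (fun k _ => hw k) hi)
  have hHW : ∑ i ∈ H, w i ≤ W := by
    rw [hW]
    exact Finset.sum_le_sum_of_subset_of_nonneg (Finset.subset_univ H)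
      (fun i _ _ => hw i)
  have hWpos : 0 < W := lt_of_lt_of_le hSH hHW
  have hmnn : 0 ≤ m := by
    rw [hm]
    exact Finset.le_inf' hHne w fun i hi => hw i
  have hNK : (K : ℝ) ≤ N := by exact_mod_cast hKN
  have hZpos : 0 < Z := by
    rw [hZ]
    have : 0 ≤ ((N : ℝ) - K) * m := mul_nonneg (by linarith) hmnn
    linarith
  have hKm : (K : ℝ) * m ≤ ∑ i ∈ H, w i := by
    have : ∑ _i ∈ H, m ≤ ∑ i ∈ H, w i :=
      Finset.sum_le_sum fun i hi => by
        rw [hm]; exact Finset.inf'_le w hi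
    simpa [hHcard, mul_comm] using this
  -- compute the inner product
  have hinner : ⟪ψ, φ⟫ = W / (Real.sqrt Z * Real.sqrt W) := by
    rw [PiLp.inner_apply, Fintype.sum_prod_type]
    have : ∀ i : Fin N, ∑ b : Fin 2, ⟪ψ (i, b), φ (i, b)⟫ = w i / (Real.sqrt Z * Real.sqrt W) := by
      intro i
      rw [Fin.sum_univ_two]
      simp only [hφ1, hψ0, hφ0, RCLike.inner_apply, conj_trivial, mul_zero, add_zero]
      rw [Real.sqrt_div (hw i) Z, Real.sqrt_div (hw i) W]
      rw [div_mul_div_comm, Real.mul_self_sqrt (hw i)]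
      ring
    rw [Finset.sum_congr rfl fun i _ => this i, ← Finset.sum_div, ← hW]
  rw [hinner, div_pow, mul_pow, Real.sq_sqrt hZpos.le, Real.sq_sqrt hWpos.le]
  have heq : W ^ 2 / (Z * W) = W / Z := by
    rw [sq]
    rw [mul_comm Z W, ← div_div, mul_div_assoc, div_self hWpos.ne', mul_one]
  rw [heq, div_le_div_iff₀ (by positivity) hZpos]
  rw [hZ]
  nlinarith [mul_nonneg (sub_nonneg.2 hNK) (sub_nonneg.2 hKm)]
end

section
/- Let N ≥ 1 and 1 ≤ K ≤ N be integers, let w ∈ ℝ^N be a nonzero vector with nonnegative entries, and let H ⊆ {1,…,N} be a top-K set for w, with W = ∑_{i=1}^N w_i, m = min_{i ∈ H} w_i, Z = (N−K)·m + ∑_{i ∈ H} w_i. Let ψ(i,0) = √(w_i/Z), ψ(i,1) = 0 for i ∈ H, ψ(i,1) = √((m − w_i)/Z) for i ∉ H, and φ(i,0) = √(w_i/W), φ(i,1) = 0. If W < Z, then there exists a unit vector χ in the Euclidean space indexed by {1,…,N} × {0,1} with χ(i,0) = 0 for all i (hence χ is orthogonal to φ), such that ψ = √(W/Z)·φ +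 √(1 − W/Z)·χ. -/
/-- If `W < Z`, the state `ψ` decomposes as `√(W/Z)·φ + √(1 - W/Z)·χ` for some unit vector `χ`
supported on the `1` sector (hence orthogonal to `φ = |w⟩ ⊗ e₀`). -/
theorem psi_decomposition (N K : ℕ) (hN : 1 ≤ N) (hK : 1 ≤ K) (hKN : K ≤ N)
    (w : Fin N → ℝ) (hw : ∀ i, 0 ≤ w i) (hw0 : w ≠ 0)
    (H : Finset (Fin N)) (hHne : H.Nonempty) (hHcard : H.card = K)
    (htop : ∀ i ∈ H, ∀ j ∉ H, w j ≤ w i)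
    (W m Z : ℝ) (hW : W = ∑ i, w i) (hm : m = H.inf' hHne w)
    (hZ : Z = ((N : ℝ) - K) * m + ∑ i ∈ H, w i)
    (hWZ : W < Z)
    (ψ φ : EuclideanSpace ℝ (Fin N × Fin 2))
    (hψ0 : ∀ i, ψ (i, 0) = Real.sqrt (w i / Z))
    (hψ1 : ∀ i, ψ (i, 1) = if i ∈ H then 0 else Real.sqrt ((m - w i) / Z))
    (hφ0 : ∀ i, φ (i, 0) = Real.sqrt (w i / W))
    (hφ1 : ∀ i, φ (i, 1) = 0) :
    ∃ χ : EuclideanSpace ℝ (Fin N × Fin 2), ‖χ‖ = 1 ∧ (∀ i, χ (i, 0) = 0) ∧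
      ψ = Real.sqrt (W / Z) • φ + Real.sqrt (1 - W / Z) • χ := by
  -- basic positivity facts
  have hWpos : 0 < W := by
    rw [hW]
    have : ∃ i, w i ≠ 0 := by
      by_contra h
      push_neg at h
      exact hw0 (funext h)
    obtain ⟨i0, hi0⟩ := this
    exact Finset.sum_pos' (fun i _ => hw i) ⟨i0, Finset.mem_univ i0, lt_of_le_of_ne (hw i0) (Ne.symm hi0)⟩
  have hZpos : 0 < Z := lt_trans hWpos hWZ
  have hZW : 0 < Z - W := sub_pos.mpr hWZ
  -- m bounds
  have hmle : ∀ j, j ∉ H → w j ≤ m := by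
    intro j hj
    rw [hm]
    exact Finset.le_inf' hHne w (fun i hi => htop i hi j hj)
  -- key sum identity : ∑_{i ∉ H} (m - w i) = Z - W
  have hcardC : (Hᶜ : Finset (Fin N)).card = N - K := by
    rw [Finset.card_compl, hHcard, Fintype.card_fin]
  have hsum : ∑ i ∈ Hᶜ, (m - w i) = Z - W := by
    rw [Finset.sum_sub_distrib, Finset.sum_const, hcardC, nsmul_eq_mul]
    have h1 : ((N - K : ℕ) : ℝ) = (N : ℝ) - K := by
      rw [Nat.cast_sub hKN]
    have h2 : ∑ i ∈ Hᶜ, w i = W - ∑ i ∈ H, w i := by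
      rw [hW, eq_sub_iff_add_eq, Finset.sum_compl_add_sum]
    rw [h1, h2, hZ]; ring
  -- define χ
  set χ : EuclideanSpace ℝ (Fin N × Fin 2) :=
    WithLp.toLp 2 (fun p : Fin N × Fin 2 => if p.2 = 0 then 0 else if p.1 ∈ H then 0 else Real.sqrt ((m - w p.1) / (Z - W)))
    with hχdef
  have hχ0 : ∀ i, χ (i, 0) = 0 := fun i => rfl
  have hχ1 : ∀ i, χ (i, 1) = if i ∈ H then 0 else Real.sqrt ((m - w i) / (Z - W)) := fun i => rfl
  refine ⟨χ, ?_, hχ0, ?_⟩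
  · -- norm 1
    rw [EuclideanSpace.norm_eq]
    have : ∑ p : Fin N × Fin 2, ‖χ p‖ ^ 2 = 1 := by
      rw [Fintype.sum_prod_type]
      have hsum2 : ∀ i : Fin N, ∑ b : Fin 2, ‖χ (i, b)‖ ^ 2
          = if i ∈ H then 0 else (m - w i) / (Z - W) := by
        intro i
        rw [Fin.sum_univ_two, hχ0, hχ1]
        by_cases hi : i ∈ H
        · simp [hi]
        · simp only [hi, if_false]
          rw [norm_zero, Real.norm_eq_abs, sq_abs, Real.sq_sqrt]
          · ring
          · exact div_nonneg (sub_nonneg.mpr (hmle i hi)) (le_of_lt hZW)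
      rw [Finset.sum_congr rfl (fun i _ => hsum2 i)]
      rw [← Finset.sum_add_sum_compl H]
      have hA : ∑ i ∈ H, (if i ∈ H then (0:ℝ) else (m - w i) / (Z - W)) = 0 := by
        apply Finset.sum_eq_zero; intro i hi; simp [hi]
      have hB : ∑ i ∈ Hᶜ, (if i ∈ H then (0:ℝ) else (m - w i) / (Z - W))
          = ∑ i ∈ Hᶜ, (m - w i) / (Z - W) := by
        apply Finset.sum_congr rfl; intro i hi
        rw [if_neg (Finset.mem_compl.mp hi)]
      rw [hA, hB, zero_add, ← Finset.sum_div, hsum, div_self (ne_of_gt hZW)]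
    rw [this, Real.sqrt_one]
  · -- decomposition
    have h1WZ : 1 - W / Z = (Z - W) / Z := by field_simp
    ext p
    obtain ⟨i, b⟩ := p
    show ψ (i, b) = Real.sqrt (W / Z) * φ (i, b) + Real.sqrt (1 - W / Z) * χ (i, b)
    fin_cases b
    · show ψ (i, 0) = Real.sqrt (W / Z) * φ (i, 0) + Real.sqrt (1 - W / Z) * χ (i, 0)
      rw [hψ0, hφ0, hχ0, mul_zero, add_zero, ← Real.sqrt_mul (by positivity)]
      congr 1
      field_simp
    · show ψ (i, 1) = Real.sqrt (W / Z) * φ (i, 1) + Real.sqrt (1 - W / Z) * χ (i, 1)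
      rw [hψ1, hφ1, hχ1, mul_zero, zero_add, h1WZ]
      by_cases hi : i ∈ H
      · simp [hi]
      · simp only [hi, if_false]
        rw [← Real.sqrt_mul (by positivity)]
        congr 1
        field_simp
end

section
/- Let K ≥ 1 be an integer and let X_1, …, X_{4K} be independent random variables, each uniformly distributed on a finite set S of size 2K. Then the probability that the number of distinct values among X_1, …, X_{4K} is less than K is at most 2·e^{−2} (in particular strictly less than 1/2). -/
open MeasureTheory ProbabilityTheory
open scoped ENNReal

lemma choose_le_two_pow' (n k : ℕ) : n.choose k ≤ 2 ^ n := by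
  rcases le_or_gt k n with h | h
  · calc n.choose k ≤ ∑ i ∈ Finset.range (n + 1), n.choose i :=
        Finset.single_le_sum (fun i _ => Nat.zero_le _) (Finset.mem_range.mpr (by omega))
    _ = 2 ^ n := Nat.sum_range_choose n
  · rw [Nat.choose_eq_zero_of_lt h]; exact Nat.zero_le _

/-- Coupon-collector bound: if `X 1, …, X (4K)` are i.i.d. uniform on a finite set `S` of
size `2K`, then the probability that fewer than `K` distinct values appear is at most
`2·e⁻²`, which is in particular strictly less than `1/2`. -/
theorem coupon_collector_bound
    {Ω : Type*} [MeasurableSpace Ω] (μ : Measure Ω) [IsProbabilityMeasure μ]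
    {S : Type*} [Fintype S] [Nonempty S] [DecidableEq S]
    [MeasurableSpace S] [MeasurableSingletonClass S]
    (K : ℕ) (hK : 1 ≤ K) (hcard : Fintype.card S = 2 * K)
    (X : Fin (4 * K) → Ω → S) (hmeas : ∀ t, Measurable (X t))
    (hindep : iIndepFun X μ)
    (hunif : ∀ t, Measure.map (X t) μ = (PMF.uniformOfFintype S).toMeasure) :
    μ {ω | (Finset.image (fun t => X t ω) Finset.univ).card < K}
        ≤ ENNReal.ofReal (2 * Real.exp (-2)) ∧
      μ {ω | (Finset.image (fun t => X t ω) Finset.univ).card < K} < 1 / 2 := by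
  have hK0 : (K : ℝ≥0∞) ≠ 0 := by exact_mod_cast Nat.one_le_iff_ne_zero.mp hK
  -- Step 1: inclusion into a union over K-subsets
  have hsub : {ω | (Finset.image (fun t => X t ω) Finset.univ).card < K} ⊆
      ⋃ T ∈ Finset.univ.powersetCard K, {ω | ∀ t, X t ω ∈ T} := by
    intro ω hω
    have hcardle : (Finset.image (fun t => X t ω) Finset.univ).card ≤ K := le_of_lt hω
    obtain ⟨T, hTsub, hTcard⟩ := Finset.exists_superset_card_eq hcardle (by omega)
    exact Set.mem_biUnion (Finset.mem_powersetCard_univ.mpr hTcard)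
      (fun t => hTsub (Finset.mem_image.mpr ⟨t, Finset.mem_univ t, rfl⟩))
  -- Step 2: each intersection event has measure (1/2)^(4K)
  have hT : ∀ T : Finset S, T.card = K →
      μ {ω | ∀ t, X t ω ∈ T} = (2 : ℝ≥0∞)⁻¹ ^ (4 * K) := by
    intro T hTcard
    have hset : {ω | ∀ t, X t ω ∈ T} = ⋂ t, (X t) ⁻¹' ↑T := by
      ext ω; simp [Set.mem_iInter]
    have hmeasT : ∀ t : Fin (4 * K),
        MeasurableSet[MeasurableSpace.comap (X t) inferInstance] ((X t) ⁻¹' ↑T) :=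
      fun t => ⟨↑T, (Set.toFinite _).measurableSet, rfl⟩
    have hfac : ∀ t : Fin (4 * K), μ ((X t) ⁻¹' ↑T) = (2 : ℝ≥0∞)⁻¹ := by
      intro t
      have : μ ((X t) ⁻¹' ↑T) = Measure.map (X t) μ ↑T := by
        rw [Measure.map_apply (hmeas t) (Set.toFinite _).measurableSet]
      rw [this, hunif t, PMF.toMeasure_apply_finset]
      simp only [PMF.uniformOfFintype_apply, hcard]
      rw [Finset.sum_const, hTcard, nsmul_eq_mul]
      push_cast
      rw [ENNReal.mul_inv (by left; exact two_ne_zero) (by left; exact ENNReal.ofNat_ne_top)]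
      rw [mul_comm (2 : ℝ≥0∞)⁻¹ _, ← mul_assoc, ENNReal.mul_inv_cancel hK0 (by simp), one_mul]
    rw [hset, hindep.meas_iInter hmeasT]
    simp only [hfac]
    rw [Finset.prod_const, Finset.card_univ, Fintype.card_fin]
  -- Step 3: union bound
  have hbound : μ {ω | (Finset.image (fun t => X t ω) Finset.univ).card < K}
      ≤ ((2 * K).choose K : ℝ≥0∞) * (2 : ℝ≥0∞)⁻¹ ^ (4 * K) := by
    calc μ {ω | (Finset.image (fun t => X t ω) Finset.univ).card < K}
        ≤ μ (⋃ T ∈ Finset.univ.powersetCard K, {ω | ∀ t, X t ω ∈ T}) := measure_mono hsub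
      _ ≤ ∑ T ∈ Finset.univ.powersetCard K, μ {ω | ∀ t, X t ω ∈ T} :=
          measure_biUnion_finset_le _ _
      _ = ∑ T ∈ Finset.univ.powersetCard K, (2 : ℝ≥0∞)⁻¹ ^ (4 * K) := by
          apply Finset.sum_congr rfl
          intro T hTmem
          exact hT T (Finset.mem_powersetCard_univ.mp hTmem)
      _ = ((Finset.univ.powersetCard K : Finset (Finset S)).card : ℝ≥0∞)
            * (2 : ℝ≥0∞)⁻¹ ^ (4 * K) := by rw [Finset.sum_const, nsmul_eq_mul]
      _ = ((2 * K).choose K : ℝ≥0∞) * (2 : ℝ≥0∞)⁻¹ ^ (4 * K) := by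
          rw [Finset.card_powersetCard, Finset.card_univ, hcard]
  -- Step 4: numeric bound
  have hnum : ((2 * K).choose K : ℝ≥0∞) * (2 : ℝ≥0∞)⁻¹ ^ (4 * K) ≤ (4 : ℝ≥0∞)⁻¹ := by
    have h1 : ((2 * K).choose K : ℝ≥0∞) ≤ (2 : ℝ≥0∞) ^ (2 * K) := by
      calc ((2 * K).choose K : ℝ≥0∞) ≤ ((2 ^ (2 * K) : ℕ) : ℝ≥0∞) := by
            exact_mod_cast choose_le_two_pow' (2 * K) K
        _ = (2 : ℝ≥0∞) ^ (2 * K) := by push_cast; ring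
    calc ((2 * K).choose K : ℝ≥0∞) * (2 : ℝ≥0∞)⁻¹ ^ (4 * K)
        ≤ (2 : ℝ≥0∞) ^ (2 * K) * (2 : ℝ≥0∞)⁻¹ ^ (4 * K) := by
          exact mul_le_mul_left h1 _
      _ = ((2 : ℝ≥0∞) ^ (2 * K) * (2 : ℝ≥0∞)⁻¹ ^ (2 * K)) * (2 : ℝ≥0∞)⁻¹ ^ (2 * K) := by
          rw [show 4 * K = 2 * K + 2 * K by ring, pow_add, mul_assoc]
      _ = (2 : ℝ≥0∞)⁻¹ ^ (2 * K) := by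
          rw [← mul_pow, ENNReal.mul_inv_cancel two_ne_zero ENNReal.ofNat_ne_top, one_pow,
            one_mul]
      _ = (2 : ℝ≥0∞)⁻¹ ^ 2 * (2 : ℝ≥0∞)⁻¹ ^ (2 * K - 2) := by
          rw [← pow_add]; congr 1; omega
      _ ≤ (2 : ℝ≥0∞)⁻¹ ^ 2 * 1 := by
          apply mul_le_mul_right
          exact pow_le_one₀ zero_le (by simp [ENNReal.inv_le_one])
      _ = (4 : ℝ≥0∞)⁻¹ := by
          rw [mul_one, ← ENNReal.inv_pow]
          norm_num
  have hexp_lt : Real.exp 1 < 2.7182818286 := Real.exp_one_lt_d9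
  have hexp_gt : (2.7182818283 : ℝ) < Real.exp 1 := Real.exp_one_gt_d9
  have hexp2 : Real.exp 2 = Real.exp 1 * Real.exp 1 := by
    rw [← Real.exp_add]; norm_num
  have hpos : (0 : ℝ) < Real.exp 2 := Real.exp_pos 2
  have hfinal : (4 : ℝ≥0∞)⁻¹ ≤ ENNReal.ofReal (2 * Real.exp (-2)) := by
    have h14 : ((4 : ℝ))⁻¹ ≤ 2 * Real.exp (-2) := by
      rw [Real.exp_neg]
      have h8 : Real.exp 2 ≤ 8 := by rw [hexp2]; nlinarith [Real.exp_pos 1]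
      have hinv : (0 : ℝ) < (Real.exp 2)⁻¹ := inv_pos.mpr hpos
      have hone : (Real.exp 2)⁻¹ * Real.exp 2 = 1 := inv_mul_cancel₀ (ne_of_gt hpos)
      nlinarith [mul_le_mul_of_nonneg_left h8 (le_of_lt hinv)]
    calc (4 : ℝ≥0∞)⁻¹ = ENNReal.ofReal (4 : ℝ)⁻¹ := by
          rw [ENNReal.ofReal_inv_of_pos (by norm_num)]; norm_num
      _ ≤ ENNReal.ofReal (2 * Real.exp (-2)) := ENNReal.ofReal_le_ofReal h14
  have hmain : μ {ω | (Finset.image (fun t => X t ω) Finset.univ).card < K}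
      ≤ ENNReal.ofReal (2 * Real.exp (-2)) := le_trans hbound (le_trans hnum hfinal)
  refine ⟨hmain, lt_of_le_of_lt hmain ?_⟩
  have hlt : 2 * Real.exp (-2) < 1 / 2 := by
    rw [Real.exp_neg]
    rw [mul_inv_lt_iff₀ hpos]
    nlinarith [hexp_gt]
  calc ENNReal.ofReal (2 * Real.exp (-2)) < ENNReal.ofReal (1 / 2) :=
      (ENNReal.ofReal_lt_ofReal_iff (by norm_num)).mpr hlt
    _ = 1 / 2 := by
      rw [ENNReal.ofReal_div_of_pos (by norm_num)]; norm_num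
end
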